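/- With f : 2^{F₂} → 4^{F₃} defined as above (f(x) agrees with x on F₂ and with z₀ ∘ (tail map) off F₂), f is injective, f intertwines the shift actions restricted to F₂ (f(g·x) = g·f(x) for g ∈ F₂), and two points x, y ∈ 2^{F₂} are in the same F₂-shift-orbit iff f(x), f(y) are in the same F₂-shift-orbit in 4^{F₃}. -/

import Mathlib

/-- The free group on two generators. -/
abbrev F2 := FreeGroup (Fin 2)

/-- The free group on three generators. -/
abbrev F3 := FreeGroup (Fin 3)

/-- The canonical embedding `F₂ ≤ F₃` (on the first two generators). -/
def ι : F2 →* F3 := FreeGroup.map Fin.castSucc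

/-- The third generator `α₃` of `F₃`. -/
def α3 : F3 := FreeGroup.of 2

/-- The shift action of a group `G` on `X^G`: `(g · x)(h) = x (g⁻¹ * h)`. -/
def shift {G X : Type*} [Group G] (g : G) (x : G → X) : G → X := fun h => x (g⁻¹ * h)

/-- `x ∈ X^G` is left-free if distinct right translates are separated. -/
def LeftFree {G X : Type*} [Group G] (x : G → X) : Prop :=
  ∀ g g' : G, g ≠ g' → ∃ h : G, x (h * g) ≠ x (h * g')

/-- The maximal terminal segment of the reduced word of `h ∈ F₃` consisting of letters
from `{α₁^{±1}, α₂^{±1}}`, viewed as an element of `F₂`. -/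
def tail (h : F3) : F2 :=
  FreeGroup.mk (((h.toWord.reverse.takeWhile fun p => p.1 ≠ 2).reverse).map
    fun p => (if hp : (p.1 : ℕ) < 2 then (⟨p.1, hp⟩ : Fin 2) else 0, p.2))

open Classical in
/-- The map `f : 2^{F₂} → 4^{F₃}`: `f x` agrees with `x` on `F₂` and with `z₀ ∘ tail`
off `F₂`. -/
noncomputable def fmap (z₀ : F2 → Fin 4) (x : F2 → Fin 2) : F3 → Fin 4 := fun h =>
  if hh : h ∈ Set.range ι then Fin.castLE (by norm_num) (x (Classical.choose hh))
  else z₀ (tail h)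

/-! ### Auxiliary lemmas -/

/-- The letter-lifting map. -/
abbrev upL : Fin 2 × Bool → Fin 3 × Bool := fun p => (Fin.castSucc p.1, p.2)

/-- The letter-lowering map (as used in `tail`). -/
abbrev downL : Fin 3 × Bool → Fin 2 × Bool := fun p =>
  (if hp : (p.1 : ℕ) < 2 then (⟨p.1, hp⟩ : Fin 2) else 0, p.2)

lemma reduce_map_up (L : List (Fin 2 × Bool)) :
    FreeGroup.reduce (L.map upL) = (FreeGroup.reduce L).map upL := by
  induction L with
  | nil => rfl
  | cons a L ih =>
    rw [List.map_cons, FreeGroup.reduce.cons, FreeGroup.reduce.cons, ih]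
    cases h : FreeGroup.reduce L with
    | nil => simp
    | cons hd tl =>
      simp only [List.map_cons]
      by_cases hc : a.1 = hd.1 ∧ a.2 = !hd.2
      · rw [if_pos, if_pos hc]
        exact ⟨by simp [hc.1], by simp [hc.2]⟩
      · rw [if_neg, if_neg hc]
        · simp
        · simp only [not_and] at hc ⊢
          intro h1 h2
          exact hc (Fin.castSucc_inj.mp h1) h2

lemma toWord_iota (k : F2) : (ι k).toWord = k.toWord.map upL := by
  conv_lhs => rw [← FreeGroup.mk_toWord (x := k)]
  rw [ι, FreeGroup.map.mk, FreeGroup.toWord_mk, reduce_map_up, FreeGroup.reduce_toWord]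

lemma up_letter_ne (p : Fin 2 × Bool) : (upL p).1 ≠ 2 := by
  simp only [upL]
  intro h
  have := congrArg Fin.val h
  simp at this
  omega

lemma mem_range_iota_iff (h : F3) :
    h ∈ Set.range ι ↔ ∀ p ∈ h.toWord, p.1 ≠ (2 : Fin 3) := by
  constructor
  · rintro ⟨k, rfl⟩ p hp
    rw [toWord_iota] at hp
    obtain ⟨q, -, rfl⟩ := List.mem_map.mp hp
    exact up_letter_ne q
  · intro hP
    refine ⟨FreeGroup.mk (h.toWord.map downL), ?_⟩
    rw [ι, FreeGroup.map.mk, List.map_map]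
    have : h.toWord.map ((fun x => (Fin.castSucc x.1, x.2)) ∘ downL) = h.toWord := by
      refine List.map_congr_left ?_ |>.trans (List.map_id _)
      intro p hp
      have hne := hP p hp
      have hlt : (p.1 : ℕ) < 2 := by
        have h3 : (p.1 : ℕ) < 3 := p.1.isLt
        have : (p.1 : ℕ) ≠ 2 := fun hc => hne (Fin.ext (by simp [hc]))
        omega
      simp only [Function.comp, downL, dif_pos hlt]
      exact Prod.ext (Fin.ext rfl) rfl
    rw [this, FreeGroup.mk_toWord]

lemma iota_injective : Function.Injective ι := by
  intro a b hab
  have := congrArg FreeGroup.toWord hab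
  rw [toWord_iota, toWord_iota] at this
  have hup : Function.Injective upL := by
    rintro ⟨x1, x2⟩ ⟨y1, y2⟩ hxy
    simp only [upL, Prod.mk.injEq, Fin.castSucc_inj] at hxy
    simp [hxy.1, hxy.2]
  exact FreeGroup.toWord_injective (List.map_injective_iff.mpr hup this)

lemma fmap_iota (z₀ : F2 → Fin 4) (x : F2 → Fin 2) (k : F2) :
    fmap z₀ x (ι k) = Fin.castLE (by norm_num) (x k) := by
  have hk : ι k ∈ Set.range ι := ⟨k, rfl⟩
  rw [fmap, dif_pos hk]
  congr 1
  exact congrArg x (iota_injective (Classical.choose_spec hk))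

/-- Prepending a non-`2` letter preserves a `(2,b) :: T` suffix of the reduction. -/
lemma reduce_cons_suffix {m : Fin 3 × Bool} (hm : m.1 ≠ 2) {K S T : List (Fin 3 × Bool)}
    {b : Bool} (hK : FreeGroup.reduce K = S ++ (2, b) :: T) :
    ∃ S', FreeGroup.reduce (m :: K) = S' ++ (2, b) :: T := by
  rw [FreeGroup.reduce.cons, hK]
  cases S with
  | nil =>
    simp only [List.nil_append]
    rw [if_neg (by rintro ⟨h1, -⟩; exact hm h1)]
    exact ⟨[m], rfl⟩
  | cons s S' =>
    simp only [List.cons_append]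
    by_cases hc : m.1 = s.1 ∧ m.2 = !s.2
    · rw [if_pos hc]; exact ⟨S', rfl⟩
    · rw [if_neg hc]; exact ⟨m :: s :: S', rfl⟩

lemma reduce_append_suffix {M : List (Fin 3 × Bool)} (hM : ∀ p ∈ M, p.1 ≠ (2 : Fin 3))
    {K S T : List (Fin 3 × Bool)} {b : Bool} (hK : FreeGroup.reduce K = S ++ (2, b) :: T) :
    ∃ S', FreeGroup.reduce (M ++ K) = S' ++ (2, b) :: T := by
  induction M with
  | nil => exact ⟨S, hK⟩
  | cons m M ih =>
    obtain ⟨S', hS'⟩ := ih (fun p hp => hM p (List.mem_cons_of_mem m hp))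
    exact reduce_cons_suffix (hM m List.mem_cons_self) hS'

/-- Every word either has no `2`-letter or decomposes at its last `2`-letter. -/
lemma word_decomp (L : List (Fin 3 × Bool)) :
    (∀ p ∈ L, p.1 ≠ (2 : Fin 3)) ∨
      ∃ S b T, L = S ++ (2, b) :: T ∧ ∀ p ∈ T, p.1 ≠ (2 : Fin 3) := by
  induction L with
  | nil => exact Or.inl (by simp)
  | cons a L ih =>
    rcases ih with hL | ⟨S, b, T, hST, hT⟩
    · by_cases ha : a.1 = (2 : Fin 3)
      · refine Or.inr ⟨[], a.2, L, ?_, hL⟩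
        obtain ⟨a1, a2⟩ := a
        simp only at ha
        simp [ha]
      · exact Or.inl (by
          intro p hp
          rcases List.mem_cons.mp hp with rfl | hp
          · exact ha
          · exact hL p hp)
    · exact Or.inr ⟨a :: S, b, T, by simp [hST], hT⟩

/-- Computing `tail` from a decomposition of the reduced word at the last `2`-letter. -/
lemma tail_of_decomp (h : F3) {S T : List (Fin 3 × Bool)} {b : Bool}
    (hST : h.toWord = S ++ (2, b) :: T) (hT : ∀ p ∈ T, p.1 ≠ (2 : Fin 3)) :
    tail h = FreeGroup.mk (T.map downL) := by
  rw [tail, hST]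
  congr 2
  rw [List.reverse_append, List.reverse_cons, List.append_assoc]
  rw [List.takeWhile_append_of_pos (by
    intro p hp
    simpa using hT p (List.mem_reverse.mp hp))]
  have : List.takeWhile (fun p => decide (p.1 ≠ (2 : Fin 3))) ([(2, b)] ++ S.reverse) = [] := by
    simp [List.takeWhile]
  rw [this, List.append_nil, List.reverse_reverse]

/-- Key lemma: left translation by `ι w` preserves non-membership in `range ι` and `tail`. -/
lemma key_lemma (w : F2) (h : F3) (hh : h ∉ Set.range ι) :
    ι w * h ∉ Set.range ι ∧ tail (ι w * h) = tail h := by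
  have hword : ¬ ∀ p ∈ h.toWord, p.1 ≠ (2 : Fin 3) := fun hc =>
    hh ((mem_range_iota_iff h).mpr hc)
  rcases word_decomp h.toWord with hL | ⟨S, b, T, hST, hT⟩
  · exact absurd hL hword
  have hM : ∀ p ∈ (ι w).toWord, p.1 ≠ (2 : Fin 3) :=
    (mem_range_iota_iff (ι w)).mp ⟨w, rfl⟩
  have hred : FreeGroup.reduce h.toWord = S ++ (2, b) :: T := by
    rw [FreeGroup.reduce_toWord]; exact hST
  obtain ⟨S', hS'⟩ := reduce_append_suffix hM hred
  have hmul : (ι w * h).toWord = S' ++ (2, b) :: T := by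
    conv_lhs => rw [← FreeGroup.mk_toWord (x := ι w), ← FreeGroup.mk_toWord (x := h)]
    rw [FreeGroup.mul_mk, FreeGroup.toWord_mk, hS']
  constructor
  · intro hc
    have := (mem_range_iota_iff _).mp hc (2, b) (by rw [hmul]; simp)
    exact this rfl
  · rw [tail_of_decomp _ hmul hT, tail_of_decomp h hST hT]

lemma fmap_equivariant (z₀ : F2 → Fin 4) (g : F2) (x : F2 → Fin 2) :
    fmap z₀ (shift g x) = shift (ι g) (fmap z₀ x) := by
  funext h
  by_cases hr : h ∈ Set.range ι
  · obtain ⟨k, rfl⟩ := hr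
    rw [fmap_iota]
    show _ = fmap z₀ x ((ι g)⁻¹ * ι k)
    rw [← map_inv, ← map_mul, fmap_iota]
    rfl
  · have hkey := key_lemma g⁻¹ h hr
    have h1 : fmap z₀ (shift g x) h = z₀ (tail h) := by rw [fmap, dif_neg hr]
    have h2 : (ι g)⁻¹ * h = ι g⁻¹ * h := by rw [map_inv]
    rw [h1]
    show _ = fmap z₀ x ((ι g)⁻¹ * h)
    rw [h2, fmap, dif_neg hkey.1, hkey.2]

/-- `f` is injective, intertwines the `F₂`-shift actions, and induces a reduction of the
`F₂`-orbit equivalence relation on `2^{F₂}` to that on `4^{F₃}`. -/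
theorem fmap_injective_equivariant_orbit_reduction (z₀ : F2 → Fin 4)
    (hz₀ : ∀ g : F2, z₀ g = 2 ∨ z₀ g = 3) (hzfree : LeftFree z₀) :
    Function.Injective (fmap z₀) ∧
    (∀ (g : F2) (x : F2 → Fin 2), fmap z₀ (shift g x) = shift (ι g) (fmap z₀ x)) ∧
    (∀ x y : F2 → Fin 2,
      (∃ g : F2, shift g x = y) ↔ ∃ g : F2, shift (ι g) (fmap z₀ x) = fmap z₀ y) := by
  have hinj : Function.Injective (fmap z₀) := by
    intro x y hxy
    funext k
    have := congrFun hxy (ι k)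
    rw [fmap_iota, fmap_iota] at this
    exact Fin.castLE_injective _ this
  refine ⟨hinj, fmap_equivariant z₀, fun x y => ⟨?_, ?_⟩⟩
  · rintro ⟨g, rfl⟩
    exact ⟨g, (fmap_equivariant z₀ g x).symm⟩
  · rintro ⟨g, hg⟩
    refine ⟨g, hinj ?_⟩
    rw [fmap_equivariant z₀ g x, hg]
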